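/- Suppose Ψ : ℝ → ℝ satisfies Ψ'' = Ψ' + 2Ψ - 3Ψ² + Ψ³ on ℝ with Ψ(s) ~ e^{2s} as s → -∞ (and Ψ'(s) ~ 2e^{2s}). Then for all s, (1/2)Ψ'(s)² = Ψ(s)²(1 - Ψ(s)/2)² + ∫_{-∞}^{s} Ψ'(σ)² dσ. -/

import Mathlib

open Real Filter Set MeasureTheory

theorem stmt2 (Ψ : ℝ → ℝ) (hC2 : ContDiff ℝ 2 Ψ)
    (hODE : ∀ s : ℝ, deriv (deriv Ψ) s =
      deriv Ψ s + 2 * Ψ s - 3 * (Ψ s) ^ 2 + (Ψ s) ^ 3)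
    (hasymp : Tendsto (fun s => Ψ s / Real.exp (2 * s)) atBot (nhds 1))
    (hasymp' : Tendsto (fun s => deriv Ψ s / (2 * Real.exp (2 * s))) atBot (nhds 1))
    (hint : ∀ s : ℝ, IntegrableOn (fun σ => (deriv Ψ σ) ^ 2) (Iic s)) :
    ∀ s : ℝ, (1 / 2) * (deriv Ψ s) ^ 2 =
      (Ψ s) ^ 2 * (1 - Ψ s / 2) ^ 2 + ∫ σ in Iic s, (deriv Ψ σ) ^ 2 := by
  set f : ℝ → ℝ := fun σ => (deriv Ψ σ) ^ 2 with hfdef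
  have h2 : ContDiff ℝ (1 + 1) Ψ := by norm_num; exact hC2
  have hΨdiff : Differentiable ℝ Ψ := (contDiff_succ_iff_deriv.mp h2).1
  have hdΨC1 : ContDiff ℝ 1 (deriv Ψ) := (contDiff_succ_iff_deriv.mp h2).2.2
  have hdΨdiff : Differentiable ℝ (deriv Ψ) := hdΨC1.differentiable one_ne_zero
  have hfc : Continuous f := (hdΨC1.continuous).pow 2
  set G : ℝ → ℝ := fun s => ∫ σ in Iic s, f σ with hGdef
  -- FTC: G has derivative f s at s
  have hG : ∀ s : ℝ, HasDerivAt G (f s) s := by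
    intro s
    have heq : G = fun s => (∫ σ in Iic (0:ℝ), f σ) + ∫ σ in (0:ℝ)..s, f σ := by
      funext s
      rw [← intervalIntegral.integral_Iic_sub_Iic (hint 0) (hint s)]
      ring
    rw [heq]
    exact ((intervalIntegral.integral_hasDerivAt_right
      (hfc.intervalIntegrable 0 s)
      hfc.stronglyMeasurable.stronglyMeasurableAtFilter
      hfc.continuousAt).const_add _)
  set F : ℝ → ℝ := fun s => (1/2) * (deriv Ψ s)^2 - (Ψ s)^2 * (1 - Ψ s / 2)^2 - G s
    with hFdef
  have hF' : ∀ s : ℝ, HasDerivAt F 0 s := by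
    intro s
    have h1 : HasDerivAt Ψ (deriv Ψ s) s := (hΨdiff s).hasDerivAt
    have hd2 : HasDerivAt (deriv Ψ) (deriv (deriv Ψ) s) s := (hdΨdiff s).hasDerivAt
    have t1 := (hd2.pow 2).const_mul (1/2 : ℝ)
    have t2 := (h1.pow 2).mul (((h1.div_const 2).const_sub 1).pow 2)
    have := (t1.sub t2).sub (hG s)
    convert this using 1
    · rfl
    · rfl
    · rfl
    rw [hODE s]
    simp only [hfdef, Pi.pow_apply]
    ring
  have hFconst : ∀ s : ℝ, F s = F 0 := fun s =>
    is_const_of_deriv_eq_zero (fun x => (hF' x).differentiableAt)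
      (fun x => (hF' x).deriv) s 0
  -- limits at -∞
  have h2s : Tendsto (fun s : ℝ => 2 * s) atBot atBot := by
    apply Filter.tendsto_atBot_atBot.2
    intro b
    exact ⟨b / 2, fun a ha => by linarith⟩
  have hexp : Tendsto (fun s : ℝ => Real.exp (2 * s)) atBot (nhds 0) :=
    Real.tendsto_exp_atBot.comp h2s
  have hΨ0 : Tendsto Ψ atBot (nhds 0) := by
    have := hasymp.mul hexp
    rw [mul_zero] at this
    refine this.congr fun s => ?_
    field_simp
  have hdΨ0 : Tendsto (deriv Ψ) atBot (nhds 0) := by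
    have hexp2 : Tendsto (fun s : ℝ => 2 * Real.exp (2*s)) atBot (nhds (2*0)) :=
      hexp.const_mul 2
    rw [mul_zero] at hexp2
    have := hasymp'.mul hexp2
    rw [mul_zero] at this
    refine this.congr fun s => ?_
    have : (2 : ℝ) * Real.exp (2 * s) ≠ 0 := by positivity
    field_simp
  have hfnn : ∀ a : ℝ, 0 ≤ f a := fun a => sq_nonneg _
  have hG0 : Tendsto G atBot (nhds 0) := by
    have key : Tendsto (fun s => ∫ a, (Iic s).indicator f a) atBot
        (nhds (∫ _ : ℝ, (0:ℝ))) := by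
      apply MeasureTheory.tendsto_integral_filter_of_dominated_convergence
        ((Iic (0:ℝ)).indicator f)
      · exact Filter.Eventually.of_forall fun s =>
          (hfc.aestronglyMeasurable).indicator measurableSet_Iic
      · filter_upwards [Filter.eventually_le_atBot (0:ℝ)] with s hs
        refine Filter.Eventually.of_forall fun a => ?_
        rw [Real.norm_eq_abs, abs_of_nonneg (Set.indicator_nonneg (fun x _ => hfnn x) a)]
        exact Set.indicator_le_indicator_of_subset (Iic_subset_Iic.2 hs)
          (fun x => hfnn x) a
      · exact (hint 0).integrable_indicator measurableSet_Iic
      · refine Filter.Eventually.of_forall fun a => ?_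
        refine Tendsto.congr' ?_ tendsto_const_nhds
        filter_upwards [Filter.eventually_le_atBot (a - 1)] with s hs
        have : a ∉ Iic s := by simp; linarith
        simp [Set.indicator_of_notMem this]
    rw [MeasureTheory.integral_zero] at key
    refine key.congr fun s => ?_
    rw [MeasureTheory.integral_indicator measurableSet_Iic]
  have hF0 : Tendsto F atBot (nhds 0) := by
    have t1 : Tendsto (fun s => (1/2 : ℝ) * (deriv Ψ s)^2) atBot (nhds ((1/2) * 0^2)) :=
      ((hdΨ0.pow 2).const_mul _)
    have t2 : Tendsto (fun s => (Ψ s)^2 * (1 - Ψ s / 2)^2) atBot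
        (nhds (0^2 * (1 - 0/2)^2)) :=
      (hΨ0.pow 2).mul (((hΨ0.div_const 2).const_sub 1).pow 2)
    have := (t1.sub t2).sub hG0
    norm_num at this
    exact this
  have hFc : Tendsto F atBot (nhds (F 0)) := by
    refine Tendsto.congr (fun s => (hFconst s).symm) tendsto_const_nhds
  have hF00 : F 0 = 0 := tendsto_nhds_unique hFc hF0
  intro s
  have := hFconst s
  rw [hF00] at this
  simp only [hFdef, hGdef, hfdef] at this
  linarith
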